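/- (Generalized quaternion Givens transformation.) Let x = (x₁, x₂)ᵀ ∈ ℍ² with x₂ ≠ 0, and set ‖x‖ = sqrt(|x₁|² + |x₂|²). Define g₁₁ = x₁/‖x‖ and g₂₁ = x₂/‖x‖, and define g₁₂, g₂₂ as follows: if |x₁| ≤ |x₂|, set g₁₂ = |g₂₁| and g₂₂ = −|g₂₁| · (conj(g₂₁))⁻¹ · conj(g₁₁); if |x₁| > |x₂|, set g₂₂ = |g₁₁| and g₁₂ = −|g₁₁| · (conj(g₁₁))⁻¹ · conj(g₂₁). Then the quaternion matrix G₂ = [[g₁₁, g₁₂],[g₂₁, g₂₂]] is unitary (G₂* G₂ = I, where G₂* is the quaternion conjugate transpose) and G₂* x = (‖x‖, 0)ᵀ. -/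

import Mathlib

open Matrix Quaternion
open scoped Kronecker Quaternion

noncomputable section

/-- The 4×4 coefficient matrix of `J`. -/
def Jb : Matrix (Fin 4) (Fin 4) ℝ := !![0,0,-1,0; 0,0,0,-1; 1,0,0,0; 0,1,0,0]
/-- The 4×4 coefficient matrix of `R`. -/
def Rb : Matrix (Fin 4) (Fin 4) ℝ := !![0,-1,0,0; 1,0,0,0; 0,0,0,1; 0,0,-1,0]
/-- The 4×4 coefficient matrix of `S`. -/
def Sb : Matrix (Fin 4) (Fin 4) ℝ := !![0,0,0,-1; 0,0,1,0; 0,-1,0,0; 1,0,0,0]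

/-- `J_n = [[0,0,−I_n,0],[0,0,0,−I_n],[I_n,0,0,0],[0,I_n,0,0]]`. -/
def JJ (n : ℕ) : Matrix (Fin 4 × Fin n) (Fin 4 × Fin n) ℝ :=
  Jb ⊗ₖ (1 : Matrix (Fin n) (Fin n) ℝ)
/-- `R_n = [[0,−I_n,0,0],[I_n,0,0,0],[0,0,0,I_n],[0,0,−I_n,0]]`. -/
def RRm (n : ℕ) : Matrix (Fin 4 × Fin n) (Fin 4 × Fin n) ℝ :=
  Rb ⊗ₖ (1 : Matrix (Fin n) (Fin n) ℝ)
/-- `S_n = [[0,0,0,−I_n],[0,0,I_n,0],[0,−I_n,0,0],[I_n,0,0,0]]`. -/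
def SSm (n : ℕ) : Matrix (Fin 4 × Fin n) (Fin 4 × Fin n) ℝ :=
  Sb ⊗ₖ (1 : Matrix (Fin n) (Fin n) ℝ)

/-- A real 4m×4n matrix `M` is JRS-symmetric if `J_m M J_nᵀ = M`,
`R_m M R_nᵀ = M` and `S_m M S_nᵀ = M`. -/
def JRSSymmetric {m n : ℕ} (M : Matrix (Fin 4 × Fin m) (Fin 4 × Fin n) ℝ) : Prop :=
  JJ m * M * (JJ n)ᵀ = M ∧ RRm m * M * (RRm n)ᵀ = M ∧ SSm m * M * (SSm n)ᵀ = M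

/-- A real 4m×4n matrix `O` is JRS-symplectic if `O J_n Oᵀ = J_m`,
`O R_n Oᵀ = R_m` and `O S_n Oᵀ = S_m`. -/
def JRSSymplectic {m n : ℕ} (O : Matrix (Fin 4 × Fin m) (Fin 4 × Fin n) ℝ) : Prop :=
  O * JJ n * Oᵀ = JJ m ∧ O * RRm n * Oᵀ = RRm m ∧ O * SSm n * Oᵀ = SSm m

/-- A real 4n×4n matrix is orthogonally JRS-symplectic if it is orthogonal
and JRS-symplectic. -/
def OrthoJRSSymplectic {n : ℕ} (W : Matrix (Fin 4 × Fin n) (Fin 4 × Fin n) ℝ) : Prop :=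
  Wᵀ * W = 1 ∧ JRSSymplectic W

/-- The 4m×4n block matrix
`[[Q₀,Q₂,Q₁,Q₃],[−Q₂,Q₀,Q₃,−Q₁],[−Q₁,−Q₃,Q₀,Q₂],[−Q₃,Q₁,−Q₂,Q₀]]`. -/
def upsilonBlocks {m n : ℕ} (Q0 Q1 Q2 Q3 : Matrix (Fin m) (Fin n) ℝ) :
    Matrix (Fin 4 × Fin m) (Fin 4 × Fin n) ℝ := fun p q =>
  !![Q0 p.2 q.2, Q2 p.2 q.2, Q1 p.2 q.2, Q3 p.2 q.2;
     -(Q2 p.2 q.2), Q0 p.2 q.2, Q3 p.2 q.2, -(Q1 p.2 q.2);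
     -(Q1 p.2 q.2), -(Q3 p.2 q.2), Q0 p.2 q.2, Q2 p.2 q.2;
     -(Q3 p.2 q.2), Q1 p.2 q.2, -(Q2 p.2 q.2), Q0 p.2 q.2] p.1 q.1

/-- The real counterpart `Υ_Q` of a quaternion matrix `Q`. -/
def Upsilon {m n : ℕ} (Q : Matrix (Fin m) (Fin n) ℍ[ℝ]) :
    Matrix (Fin 4 × Fin m) (Fin 4 × Fin n) ℝ :=
  upsilonBlocks (fun i j => (Q i j).re) (fun i j => (Q i j).imI)
    (fun i j => (Q i j).imJ) (fun i j => (Q i j).imK)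

/-- Upper Hessenberg: zero below the first subdiagonal. -/
def UpperHessenbergM {n : ℕ} (A : Matrix (Fin n) (Fin n) ℝ) : Prop :=
  ∀ i j : Fin n, (j : ℕ) + 1 < (i : ℕ) → A i j = 0

/-- Upper triangular: zero below the diagonal. -/
def UpperTriangularM {m n : ℕ} (A : Matrix (Fin m) (Fin n) ℝ) : Prop :=
  ∀ (i : Fin m) (j : Fin n), (j : ℕ) < (i : ℕ) → A i j = 0

/-- Strictly upper triangular: zero on and below the diagonal. -/
def StrictlyUpperTriangularM {m n : ℕ} (A : Matrix (Fin m) (Fin n) ℝ) : Prop :=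
  ∀ (i : Fin m) (j : Fin n), (j : ℕ) ≤ (i : ℕ) → A i j = 0

/-- Tridiagonal: zero outside the three central diagonals. -/
def TridiagonalM {n : ℕ} (A : Matrix (Fin n) (Fin n) ℝ) : Prop :=
  ∀ i j : Fin n, ((i : ℕ) + 1 < (j : ℕ) ∨ (j : ℕ) + 1 < (i : ℕ)) → A i j = 0


lemma qcomm (r : ℝ) (p q : ℍ[ℝ]) : p * ((r:ℍ[ℝ]) * q) = (r:ℍ[ℝ]) * (p * q) := by
  rw [← mul_assoc, ← Quaternion.coe_commutes, mul_assoc]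

lemma qL1 (a b : ℍ[ℝ]) : star a * a + star b * b = ((‖a‖^2 + ‖b‖^2 : ℝ) : ℍ[ℝ]) := by
  rw [Quaternion.star_mul_self, Quaternion.star_mul_self, ← Quaternion.coe_add,
    Quaternion.normSq_eq_norm_mul_self, Quaternion.normSq_eq_norm_mul_self]
  push_cast [sq]
  ring_nf

lemma qL2 (a b : ℍ[ℝ]) (hb : b ≠ 0) :
    star a * ((‖b‖ : ℝ) : ℍ[ℝ]) + star b * (-(((‖b‖:ℝ):ℍ[ℝ]) * (star b)⁻¹ * star a)) = 0 := by
  have hsb : star b ≠ 0 := star_ne_zero.mpr hb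
  simp only [mul_neg, mul_assoc, qcomm, mul_inv_cancel_left₀ hsb, ← Quaternion.coe_commutes]
  simp

lemma qStarD (a b : ℍ[ℝ]) :
    star (-(((‖b‖:ℝ):ℍ[ℝ]) * (star b)⁻¹ * star a)) = -(a * b⁻¹ * ((‖b‖:ℝ):ℍ[ℝ])) := by
  simp [StarMul.star_mul, mul_assoc, Quaternion.star_coe]

lemma qL3 (a b : ℍ[ℝ]) (hb : b ≠ 0) :
    ((‖b‖:ℝ):ℍ[ℝ]) * a + star (-(((‖b‖:ℝ):ℍ[ℝ]) * (star b)⁻¹ * star a)) * b = 0 := by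
  rw [qStarD]
  simp only [neg_mul, mul_assoc, qcomm, inv_mul_cancel₀ hb, mul_one]
  rw [← Quaternion.coe_commutes, add_neg_cancel]

lemma qL4 (a b : ℍ[ℝ]) (hb : b ≠ 0) :
    ((‖b‖:ℝ):ℍ[ℝ]) * ((‖b‖:ℝ):ℍ[ℝ]) +
      star (-(((‖b‖:ℝ):ℍ[ℝ]) * (star b)⁻¹ * star a)) * (-(((‖b‖:ℝ):ℍ[ℝ]) * (star b)⁻¹ * star a)) =
      ((‖a‖^2 + ‖b‖^2 : ℝ) : ℍ[ℝ]) := by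
  have hnb : ‖b‖ ≠ 0 := norm_ne_zero_iff.mpr hb
  have key : b⁻¹ * (((‖b‖:ℝ):ℍ[ℝ]) * (((‖b‖:ℝ):ℍ[ℝ]) * ((star b)⁻¹ * star a))) = star a := by
    rw [qcomm, qcomm, ← mul_assoc (b⁻¹), ← _root_.mul_inv_rev, Quaternion.star_mul_self,
      Quaternion.normSq_eq_norm_mul_self, ← Quaternion.coe_inv, ← mul_assoc,
      ← Quaternion.coe_mul, ← mul_assoc, ← Quaternion.coe_mul]
    rw [show ‖b‖ * ‖b‖ * (‖b‖ * ‖b‖)⁻¹ = 1 by field_simp]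
    simp
  rw [qStarD, neg_mul_neg]
  calc ((‖b‖:ℝ):ℍ[ℝ]) * ((‖b‖:ℝ):ℍ[ℝ]) +
      a * b⁻¹ * ((‖b‖:ℝ):ℍ[ℝ]) * (((‖b‖:ℝ):ℍ[ℝ]) * (star b)⁻¹ * star a)
      = ((‖b‖:ℝ):ℍ[ℝ]) * ((‖b‖:ℝ):ℍ[ℝ]) +
        a * (b⁻¹ * (((‖b‖:ℝ):ℍ[ℝ]) * (((‖b‖:ℝ):ℍ[ℝ]) * ((star b)⁻¹ * star a)))) := by
        simp only [mul_assoc]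
    _ = ((‖b‖:ℝ):ℍ[ℝ]) * ((‖b‖:ℝ):ℍ[ℝ]) + a * star a := by rw [key]
    _ = _ := by
        rw [Quaternion.self_mul_star, ← Quaternion.coe_mul, ← Quaternion.coe_add]
        congr 1
        rw [Quaternion.normSq_eq_norm_mul_self]
        ring

lemma qV1 (a b x y : ℍ[ℝ]) (h : a * (b⁻¹ * y) = x) :
    ((‖b‖:ℝ):ℍ[ℝ]) * x + star (-(((‖b‖:ℝ):ℍ[ℝ]) * (star b)⁻¹ * star a)) * y = 0 := by
  rw [qStarD]
  simp only [neg_mul, mul_assoc, qcomm, h]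
  simp

lemma matU (a b c d : ℍ[ℝ]) (h1 : star a * a + star c * c = 1)
    (h2 : star a * b + star c * d = 0) (h3 : star b * a + star d * c = 0)
    (h4 : star b * b + star d * d = 1) :
    (!![a,b;c,d])ᴴ * !![a,b;c,d] = 1 := by
  have hT : (!![a,b;c,d])ᴴ = !![star a, star c; star b, star d] := by
    funext i j
    fin_cases i <;> fin_cases j <;> rfl
  rw [hT, Matrix.mul_fin_two, Matrix.one_fin_two, h1, h2, h3, h4]

lemma matV (a b c d x y n : ℍ[ℝ]) (h1 : star a * x + star c * y = n)
    (h2 : star b * x + star d * y = 0) :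
    (!![a,b;c,d])ᴴ *ᵥ ![x, y] = ![n, 0] := by
  have hT : (!![a,b;c,d])ᴴ = !![star a, star c; star b, star d] := by
    funext i j
    fin_cases i <;> fin_cases j <;> rfl
  rw [hT]
  funext i
  fin_cases i <;> simp [Matrix.mulVec, dotProduct, Fin.sum_univ_two, h1, h2]

/-- The generalized quaternion Givens transformation `G₂` is
unitary and maps `x` to `(‖x‖, 0)ᵀ`. -/
theorem generalized_quaternion_givens (x1 x2 : ℍ[ℝ]) (hx2 : x2 ≠ 0) :
    let nx : ℝ := Real.sqrt (‖x1‖ ^ 2 + ‖x2‖ ^ 2)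
    let g11 : ℍ[ℝ] := x1 / (nx : ℍ[ℝ])
    let g21 : ℍ[ℝ] := x2 / (nx : ℍ[ℝ])
    let g12 : ℍ[ℝ] :=
      if ‖x1‖ ≤ ‖x2‖ then ((‖g21‖ : ℝ) : ℍ[ℝ])
      else -(((‖g11‖ : ℝ) : ℍ[ℝ]) * (star g11)⁻¹ * star g21)
    let g22 : ℍ[ℝ] :=
      if ‖x1‖ ≤ ‖x2‖ then -(((‖g21‖ : ℝ) : ℍ[ℝ]) * (star g21)⁻¹ * star g11)
      else ((‖g11‖ : ℝ) : ℍ[ℝ])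
    let G : Matrix (Fin 2) (Fin 2) ℍ[ℝ] := !![g11, g12; g21, g22]
    Gᴴ * G = 1 ∧ Gᴴ *ᵥ ![x1, x2] = ![((nx : ℝ) : ℍ[ℝ]), 0] := by
  intro nx g11 g21 g12 g22 G
  have hx2n : (0:ℝ) < ‖x2‖ := norm_pos_iff.mpr hx2
  have hpos : (0:ℝ) < ‖x1‖^2 + ‖x2‖^2 := by positivity
  have hnx : 0 < nx := Real.sqrt_pos.mpr hpos
  have hnx2 : nx^2 = ‖x1‖^2 + ‖x2‖^2 := Real.sq_sqrt hpos.le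
  have hnxq : ((nx:ℝ):ℍ[ℝ]) ≠ 0 := by
    intro h
    exact hnx.ne' (by simpa using congrArg QuaternionAlgebra.re h)
  have hg21 : g21 ≠ 0 := div_ne_zero hx2 hnxq
  have hn11 : ‖g11‖ = ‖x1‖ / nx := by
    show ‖x1 / ((nx:ℝ):ℍ[ℝ])‖ = _
    rw [norm_div, Quaternion.norm_coe, Real.norm_eq_abs, abs_of_pos hnx]
  have hn21 : ‖g21‖ = ‖x2‖ / nx := by
    show ‖x2 / ((nx:ℝ):ℍ[ℝ])‖ = _
    rw [norm_div, Quaternion.norm_coe, Real.norm_eq_abs, abs_of_pos hnx]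
  have hsum : ‖g11‖^2 + ‖g21‖^2 = 1 := by
    rw [hn11, hn21, div_pow, div_pow, ← add_div, ← hnx2, div_self (by positivity)]
  have hG : G = !![g11, g12; g21, g22] := rfl
  -- the (0,0) entry identity
  have h1 : star g11 * g11 + star g21 * g21 = 1 := by
    rw [qL1, hsum, Quaternion.coe_one]
  -- the first vector entry
  have v1 : star g11 * x1 + star g21 * x2 = ((nx:ℝ):ℍ[ℝ]) := by
    show star (x1 / ((nx:ℝ):ℍ[ℝ])) * x1 + star (x2 / ((nx:ℝ):ℍ[ℝ])) * x2 = _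
    rw [div_eq_mul_inv, div_eq_mul_inv, StarMul.star_mul, StarMul.star_mul, star_inv₀, Quaternion.star_coe,
      mul_assoc, mul_assoc, ← mul_add, qL1, ← Quaternion.coe_inv, ← Quaternion.coe_mul]
    congr 1
    rw [← hnx2]
    field_simp
  by_cases hc : ‖x1‖ ≤ ‖x2‖
  · have hg12 : g12 = ((‖g21‖:ℝ):ℍ[ℝ]) := if_pos hc
    have hg22 : g22 = -(((‖g21‖:ℝ):ℍ[ℝ]) * (star g21)⁻¹ * star g11) := if_pos hc
    have hkey : g11 * (g21⁻¹ * x2) = x1 := by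
      show (x1 / ((nx:ℝ):ℍ[ℝ])) * ((x2 / ((nx:ℝ):ℍ[ℝ]))⁻¹ * x2) = x1
      rw [div_eq_mul_inv, div_eq_mul_inv, _root_.mul_inv_rev, inv_inv, mul_assoc ((nx:ℝ):ℍ[ℝ]),
        inv_mul_cancel₀ hx2, mul_one, mul_assoc, inv_mul_cancel₀ hnxq, mul_one]
    constructor
    · rw [hG, hg12, hg22]
      exact matU _ _ _ _ h1 (qL2 g11 g21 hg21)
        (by rw [Quaternion.star_coe]; exact qL3 g11 g21 hg21)
        (by rw [Quaternion.star_coe, qL4 g11 g21 hg21, hsum, Quaternion.coe_one])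
    · rw [hG, hg12, hg22]
      exact matV _ _ _ _ _ _ _ v1
        (by rw [Quaternion.star_coe]; exact qV1 g11 g21 x1 x2 hkey)
  · have hx1 : x1 ≠ 0 := by
      intro h
      rw [h, norm_zero] at hc
      exact hc (norm_nonneg x2)
    have hg11 : g11 ≠ 0 := div_ne_zero hx1 hnxq
    have hg12 : g12 = -(((‖g11‖:ℝ):ℍ[ℝ]) * (star g11)⁻¹ * star g21) := if_neg hc
    have hg22 : g22 = ((‖g11‖:ℝ):ℍ[ℝ]) := if_neg hc
    have hsum' : ‖g21‖^2 + ‖g11‖^2 = 1 := by rw [add_comm]; exact hsum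
    have hkey2 : g21 * (g11⁻¹ * x1) = x2 := by
      show (x2 / ((nx:ℝ):ℍ[ℝ])) * ((x1 / ((nx:ℝ):ℍ[ℝ]))⁻¹ * x1) = x2
      rw [div_eq_mul_inv, div_eq_mul_inv, _root_.mul_inv_rev, inv_inv, mul_assoc ((nx:ℝ):ℍ[ℝ]),
        inv_mul_cancel₀ hx1, mul_one, mul_assoc, inv_mul_cancel₀ hnxq, mul_one]
    constructor
    · rw [hG, hg12, hg22]
      exact matU _ _ _ _ h1
        (by rw [add_comm]; exact qL2 g21 g11 hg11)
        (by rw [Quaternion.star_coe, add_comm]; exact qL3 g21 g11 hg11)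
        (by rw [Quaternion.star_coe, add_comm, qL4 g21 g11 hg11, hsum', Quaternion.coe_one])
    · rw [hG, hg12, hg22]
      exact matV _ _ _ _ _ _ _ v1
        (by rw [Quaternion.star_coe, add_comm]; exact qV1 g21 g11 x2 x1 hkey2)
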